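/- Let (X,d) be a metric space homeomorphic to ℝ whose isometry group acts transitively. Then there exists a function h : ℝ → ℝ such that (X,d) is isometric to (ℝ, d_h) where d_h(s,t) := h(|s−t|); equivalently, every isometrically homogeneous metric on the line is, up to isometry, a translation-invariant metric on ℝ. -/

import Mathlib

open Filter Topology Set Function

namespace IsomHomogProof

variable {D : ℝ → ℝ → ℝ}

lemma orbit_lt_succ {f : ℝ → ℝ} (hfm : StrictMono f) {x : ℝ} (hx : x < f x) (n : ℕ) :
    f^[n] x < f^[n + 1] x := by
  induction n with
  | zero => simpa using hx
  | succ n ih =>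
    rw [Function.iterate_succ_apply', Function.iterate_succ_apply']
    exact hfm ih

lemma orbit_mono {f : ℝ → ℝ} (hfm : StrictMono f) {x : ℝ} (hx : x < f x) :
    StrictMono fun n : ℕ => f^[n] x :=
  strictMono_nat_of_lt_succ (orbit_lt_succ hfm hx)

lemma orbit_tendsto {f : ℝ → ℝ} (hfc : Continuous f) (hfm : StrictMono f) {x b : ℝ}
    (hx : x < f x) (hb : ∀ n, f^[n] x ≤ b) :
    ∃ L, L ≤ b ∧ x < L ∧ f L = L ∧ Tendsto (fun n : ℕ => f^[n] x) atTop (𝓝 L) := by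
  have hmono := (orbit_mono hfm hx).monotone
  have hbdd : BddAbove (Set.range fun n : ℕ => f^[n] x) := by
    refine ⟨b, ?_⟩
    rintro y ⟨n, rfl⟩
    exact hb n
  set L := ⨆ n : ℕ, f^[n] x with hL
  have ht : Tendsto (fun n : ℕ => f^[n] x) atTop (𝓝 L) := tendsto_atTop_ciSup hmono hbdd
  have hLb : L ≤ b := ciSup_le hb
  have hxL : x < L := by
    have h1 : f^[1] x ≤ L := le_ciSup hbdd 1
    simpa using lt_of_lt_of_le (by simpa using hx) h1
  have h2 : Tendsto (fun n : ℕ => f^[n + 1] x) atTop (𝓝 L) :=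
    ht.comp (tendsto_add_atTop_nat 1)
  have h2' : Tendsto (fun n : ℕ => f (f^[n] x)) atTop (𝓝 L) := by
    simpa [Function.iterate_succ_apply'] using h2
  have h3 : Tendsto (fun n : ℕ => f (f^[n] x)) atTop (𝓝 (f L)) :=
    (hfc.tendsto L).comp ht
  exact ⟨L, hLb, hxL, tendsto_nhds_unique h3 h2', ht⟩

lemma D_iter {f : ℝ → ℝ} (hfi : ∀ s t, D (f s) (f t) = D s t) {a : ℝ} (hfa : f a = a)
    (x : ℝ) (n : ℕ) : D a (f^[n] x) = D a x := by
  induction n with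
  | zero => rfl
  | succ n ih =>
    rw [Function.iterate_succ_apply']
    calc D a (f (f^[n] x)) = D (f a) (f (f^[n] x)) := by rw [hfa]
      _ = D a (f^[n] x) := hfi _ _
      _ = D a x := ih

/-- Core lemma A: no strictly monotone isometry can push everything up on a bounded
interval between two fixed points. -/
lemma coreA (hD0 : ∀ x y : ℝ, D x y = 0 ↔ x = y)
    (hDc : ∀ a : ℝ, Continuous fun y => D a y)
    {f : ℝ → ℝ} (hfc : Continuous f) (hfm : StrictMono f)
    (hfi : ∀ s t, D (f s) (f t) = D s t)
    {a b : ℝ} (hab : a < b) (hfa : f a = a) (hfb : f b = b)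
    (hgt : ∀ x, a < x → x < b → x < f x) : False := by
  have key : ∀ x, a < x → x < b → D a x = D a b := by
    intro x hax hxb
    have hxf : x < f x := hgt x hax hxb
    have horb : ∀ n : ℕ, f^[n] x < b := by
      intro n
      induction n with
      | zero => simpa using hxb
      | succ n ih =>
        rw [Function.iterate_succ_apply']
        calc f (f^[n] x) < f b := hfm ih
          _ = b := hfb
    obtain ⟨L, hLb, hxL, hfL, ht⟩ := orbit_tendsto hfc hfm hxf fun n => (horb n).le
    have hLb' : L = b := by
      rcases lt_or_eq_of_le hLb with h | h
      · exact absurd hfL (ne_of_gt (hgt L (hax.trans hxL) h))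
      · exact h
    have t1 : Tendsto (fun n : ℕ => D a (f^[n] x)) atTop (𝓝 (D a b)) := by
      rw [← hLb']
      exact ((hDc a).tendsto L).comp ht
    have t2 : Tendsto (fun n : ℕ => D a (f^[n] x)) atTop (𝓝 (D a x)) := by
      simpa [D_iter hfi hfa] using tendsto_const_nhds (α := ℝ) (f := atTop (α := ℕ)) (a := D a x)
    exact tendsto_nhds_unique t2 t1
  have h1 : ∀ᶠ x in 𝓝[>] a, D a x = D a b := by
    filter_upwards [Ioo_mem_nhdsGT_of_mem (Set.left_mem_Ico.2 hab)] with x hx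
    exact key x hx.1 hx.2
  have t0 : Tendsto (fun x => D a x) (𝓝[>] a) (𝓝 0) := by
    have := ((hDc a).tendsto a).mono_left (nhdsWithin_le_nhds (s := Set.Ioi a))
    simpa [(hD0 a a).2 rfl] using this
  have tb : Tendsto (fun x => D a x) (𝓝[>] a) (𝓝 (D a b)) :=
    Tendsto.congr' (h1.mono fun x hx => hx.symm) tendsto_const_nhds
  have : D a b = 0 := tendsto_nhds_unique tb t0
  exact absurd ((hD0 a b).1 this) (ne_of_lt hab)

/-- Core lemma B: no strictly monotone isometry can push everything up on an
unbounded interval above a fixed point. -/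
lemma coreB (hD0 : ∀ x y : ℝ, D x y = 0 ↔ x = y)
    (hDnn : ∀ x y : ℝ, 0 ≤ D x y)
    (hDc : ∀ a : ℝ, Continuous fun y => D a y)
    {f : ℝ → ℝ} (hfc : Continuous f) (hfm : StrictMono f)
    (hfi : ∀ s t, D (f s) (f t) = D s t)
    {a : ℝ} (hfa : f a = a)
    (hgt : ∀ x, a < x → x < f x) : False := by
  set x₀ := a + 1 with hx₀
  have hax₀ : a < x₀ := by simp [hx₀]
  have hx₀f : x₀ < f x₀ := hgt x₀ hax₀
  obtain ⟨y₀, hy₀K, hy₀min⟩ := isCompact_Icc.exists_isMinOn (Set.nonempty_Icc.2 hx₀f.le)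
    ((hDc a).continuousOn (s := Set.Icc x₀ (f x₀)))
  have hy₀pos : 0 < D a y₀ := by
    rcases (hDnn a y₀).lt_or_eq with h | h
    · exact h
    · exfalso
      have h1 : a = y₀ := (hD0 a y₀).1 h.symm
      have h2 : a < y₀ := lt_of_lt_of_le hax₀ hy₀K.1
      linarith [h1.le]
  have key : ∀ x, a < x → x < x₀ → D a y₀ ≤ D a x := by
    intro x hax hxx0
    have hxf : x < f x := hgt x hax
    have hex : ∃ n : ℕ, x₀ ≤ f^[n] x := by
      by_contra hc
      push_neg at hc
      obtain ⟨L, _, hxL, hfL, _⟩ := orbit_tendsto hfc hfm hxf fun n => (hc n).le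
      exact absurd hfL (ne_of_gt (hgt L (hax.trans hxL)))
    classical
    set n := Nat.find hex with hndef
    have hn : x₀ ≤ f^[n] x := Nat.find_spec hex
    have hn0 : n ≠ 0 := by
      intro h0
      rw [h0] at hn
      simp at hn
      linarith
    obtain ⟨m, hm⟩ := Nat.exists_eq_succ_of_ne_zero hn0
    have hlt : f^[m] x < x₀ := by
      have hmin := Nat.find_min hex (m := m) (by omega)
      exact lt_of_not_ge hmin
    have hup : f^[n] x ≤ f x₀ := by
      rw [hm, Function.iterate_succ_apply']
      exact (hfm hlt).le
    have hmem : f^[n] x ∈ Set.Icc x₀ (f x₀) := ⟨hn, hup⟩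
    have hmin2 : D a y₀ ≤ D a (f^[n] x) := isMinOn_iff.1 hy₀min _ hmem
    have := D_iter hfi hfa x n
    linarith
  have h1 : ∀ᶠ x in 𝓝[>] a, D a y₀ ≤ D a x := by
    filter_upwards [Ioo_mem_nhdsGT_of_mem (Set.left_mem_Ico.2 hax₀)] with x hx
    exact key x hx.1 hx.2
  have t0 : Tendsto (fun x => D a x) (𝓝[>] a) (𝓝 0) := by
    have := ((hDc a).tendsto a).mono_left (nhdsWithin_le_nhds (s := Set.Ioi a))
    simpa [(hD0 a a).2 rfl] using this
  have : D a y₀ ≤ 0 := ge_of_tendsto t0 h1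
  linarith




/-- A "good" permutation: strictly monotone and a `D`-isometry. -/
def good (D : ℝ → ℝ → ℝ) (σ : Equiv.Perm ℝ) : Prop :=
  StrictMono σ ∧ ∀ s t, D (σ s) (σ t) = D s t

lemma good.continuous {σ : Equiv.Perm ℝ} (hg : good D σ) : Continuous σ := by
  have := (StrictMono.orderIsoOfSurjective σ hg.1 σ.surjective).continuous
  rwa [StrictMono.coe_orderIsoOfSurjective] at this

lemma good.one : good D 1 := by
  constructor
  · intro a b h; simpa using h
  · intro s t; simp

lemma good.mul {σ τ : Equiv.Perm ℝ} (hσ : good D σ) (hτ : good D τ) : good D (σ * τ) := by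
  constructor
  · intro a b h
    exact hσ.1 (hτ.1 h)
  · intro s t
    simp only [Equiv.Perm.mul_apply]
    rw [hσ.2, hτ.2]

lemma good.inv {σ : Equiv.Perm ℝ} (hσ : good D σ) : good D σ⁻¹ := by
  constructor
  · intro a b h
    by_contra hc
    push_neg at hc
    have := hσ.1.monotone hc
    simp only [Equiv.Perm.inv_def, Equiv.apply_symm_apply] at this
    exact absurd h (not_lt.2 this)
  · intro s t
    have := hσ.2 (σ⁻¹ s) (σ⁻¹ t)
    simpa using this.symm


lemma perm_inv_strictMono {τ : Equiv.Perm ℝ} (h : StrictMono ⇑τ) : StrictMono ⇑τ⁻¹ := by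
  intro s t hst
  by_contra hc
  push_neg at hc
  have := h.monotone hc
  simp only [Equiv.Perm.inv_def, Equiv.apply_symm_apply] at this
  exact absurd hst (not_lt.2 this)

lemma perm_inv_strictAnti {τ : Equiv.Perm ℝ} (h : StrictAnti ⇑τ) : StrictAnti ⇑τ⁻¹ := by
  intro s t hst
  by_contra hc
  push_neg at hc
  have := h.antitone hc
  simp only [Equiv.Perm.inv_def, Equiv.apply_symm_apply] at this
  exact absurd hst (not_lt.2 this)


lemma good.zpow {σ : Equiv.Perm ℝ} (hσ : good D σ) : ∀ k : ℤ, good D (σ ^ k) := by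
  intro k
  induction k using Int.induction_on with
  | zero => rw [zpow_zero]; exact good.one
  | succ n ih => rw [zpow_add_one]; exact ih.mul hσ
  | pred n ih => rw [zpow_sub_one]; exact ih.mul hσ.inv

lemma orbit_fixed_dec {f : ℝ → ℝ} (hfc : Continuous f) (hfm : StrictMono f) {x b : ℝ}
    (hx : f x < x) (hb : ∀ n : ℕ, b ≤ f^[n] x) : ∃ L, f L = L := by
  have hdec : ∀ n : ℕ, f^[n + 1] x < f^[n] x := by
    intro n
    induction n with
    | zero => simpa using hx
    | succ n ih =>
      have := hfm ih
      rwa [← Function.iterate_succ_apply' f (n + 1) x, ← Function.iterate_succ_apply' f n x]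
        at this
  have hanti : Antitone fun n : ℕ => f^[n] x := antitone_nat_of_succ_le fun n => (hdec n).le
  have hbdd : BddBelow (Set.range fun n : ℕ => f^[n] x) := by
    refine ⟨b, ?_⟩
    rintro y ⟨n, rfl⟩
    exact hb n
  set L := ⨅ n : ℕ, f^[n] x
  have ht : Tendsto (fun n : ℕ => f^[n] x) atTop (𝓝 L) := tendsto_atTop_ciInf hanti hbdd
  have h2 : Tendsto (fun n : ℕ => f^[n + 1] x) atTop (𝓝 L) :=
    ht.comp (tendsto_add_atTop_nat 1)
  have h2' : Tendsto (fun n : ℕ => f (f^[n] x)) atTop (𝓝 L) := by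
    simpa [Function.iterate_succ_apply'] using h2
  exact ⟨L, tendsto_nhds_unique ((hfc.tendsto L).comp ht) h2'⟩

lemma ivt_fix {σ : ℝ → ℝ} (hfc : Continuous σ) {x q : ℝ} (hx : σ x < x) (hq : q < σ q) :
    ∃ c ∈ Set.uIcc x q, σ c = c := by
  set g : ℝ → ℝ := fun y => σ y - y with hgdef
  have hgc : Continuous g := hfc.sub continuous_id
  have h0 : (0 : ℝ) ∈ Set.uIcc (g x) (g q) := by
    rw [Set.mem_uIcc]
    left
    constructor <;> simp [hgdef] <;> linarith
  obtain ⟨c, hc, hgc0⟩ := intermediate_value_uIcc hgc.continuousOn h0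
  refine ⟨c, hc, ?_⟩
  have : σ c - c = 0 := hgc0
  linarith

lemma freeAux1 (hD0 : ∀ x y : ℝ, D x y = 0 ↔ x = y)
    (hDnn : ∀ x y : ℝ, 0 ≤ D x y)
    (hDc : ∀ a : ℝ, Continuous fun y => D a y)
    {σ : Equiv.Perm ℝ} (hg : good D σ) {p q : ℝ} (hpq : p < q)
    (hp : σ p = p) (hq : q < σ q) : False := by
  have hfc : Continuous σ := hg.continuous
  have hfm : StrictMono σ := hg.1
  have hfi := hg.2
  set A : Set ℝ := Set.Icc p q ∩ {y | σ y = y} with hA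
  have hAcl : IsClosed ({y : ℝ | σ y = y}) := isClosed_eq hfc continuous_id
  have hAcomp : IsCompact A := isCompact_Icc.inter_right hAcl
  have hAne : A.Nonempty := ⟨p, ⟨le_refl p, hpq.le⟩, hp⟩
  have hbdd : BddAbove A := hAcomp.bddAbove
  obtain ⟨⟨hpa, haq⟩, hfa⟩ := hAcomp.sSup_mem hAne
  set a := sSup A
  have haq' : a < q := by
    rcases lt_or_eq_of_le haq with h | h
    · exact h
    · exact absurd (h ▸ hfa) (ne_of_gt hq)
  have nofix : ∀ x, a < x → x ≤ q → σ x ≠ x := by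
    intro x hax hxq hfx
    exact absurd (le_csSup hbdd ⟨⟨hpa.trans (le_of_lt (lt_of_le_of_lt (le_refl a) hax)), hxq⟩, hfx⟩)
      (not_le.2 hax)
  have pos : ∀ x, a < x → x ≤ q → x < σ x := by
    intro x hax hxq
    rcases (nofix x hax hxq).lt_or_gt with h | h
    · exfalso
      obtain ⟨c, hc, hcfix⟩ := ivt_fix hfc h hq
      rw [Set.uIcc_of_le hxq] at hc
      exact nofix c (hax.trans_le hc.1) hc.2 hcfix
    · exact h
  set B : Set ℝ := Set.Ici q ∩ {y | σ y = y} with hB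
  by_cases hBn : B.Nonempty
  · have hBcl : IsClosed B := isClosed_Ici.inter hAcl
    have hBbdd : BddBelow B := ⟨q, fun y hy => hy.1⟩
    obtain ⟨hqb, hfb⟩ := hBcl.csInf_mem hBn hBbdd
    set b := sInf B
    have hqb' : q < b := by
      rcases lt_or_eq_of_le (Set.mem_Ici.1 hqb) with h | h
      · exact h
      · exact absurd (h ▸ hfb) (ne_of_gt hq)
    have posIoo : ∀ x, a < x → x < b → x < σ x := by
      intro x hax hxb
      rcases le_or_gt x q with h | h
      · exact pos x hax h
      · rcases lt_trichotomy (σ x) x with h1 | h1 | h1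
        · exfalso
          obtain ⟨c, hc, hcfix⟩ := ivt_fix hfc h1 hq
          rw [Set.uIcc_comm, Set.uIcc_of_le h.le] at hc
          have : b ≤ c := csInf_le hBbdd ⟨hc.1, hcfix⟩
          linarith [hc.2]
        · exfalso
          have : b ≤ x := csInf_le hBbdd ⟨h.le, h1⟩
          linarith
        · exact h1
    exact coreA hD0 hDc hfc hfm hfi (haq'.trans hqb') hfa hfb posIoo
  · have posIoi : ∀ x, a < x → x < σ x := by
      intro x hax
      rcases le_or_gt x q with h | h
      · exact pos x hax h
      · rcases lt_trichotomy (σ x) x with h1 | h1 | h1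
        · exfalso
          obtain ⟨c, hc, hcfix⟩ := ivt_fix hfc h1 hq
          rw [Set.uIcc_comm, Set.uIcc_of_le h.le] at hc
          exact hBn ⟨c, hc.1, hcfix⟩
        · exact absurd ⟨x, h.le, h1⟩ hBn
        · exact h1
    exact coreB hD0 hDnn hDc hfc hfm hfi hfa posIoi

lemma freeAux2 (hD0 : ∀ x y : ℝ, D x y = 0 ↔ x = y)
    (hDnn : ∀ x y : ℝ, 0 ≤ D x y)
    (hDc : ∀ a : ℝ, Continuous fun y => D a y)
    {σ : Equiv.Perm ℝ} (hg : good D σ) {p q : ℝ} (hpq : p < q)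
    (hp : σ p = p) (hq : σ q ≠ q) : False := by
  rcases hq.lt_or_gt with h | h
  · -- σ q < q : use σ⁻¹
    have hginv := hg.inv (D := D)
    have hpinv : σ⁻¹ p = p := by
      conv_lhs => rw [← hp]
      simp
    have hqinv : q < σ⁻¹ q := by
      have := hginv.1 (show σ q < q from h)
      simpa using this
    exact freeAux1 hD0 hDnn hDc hginv hpq hpinv hqinv
  · exact freeAux1 hD0 hDnn hDc hg hpq hp h

/-- Freeness: a good permutation with a fixed point is the identity. -/
lemma free_of_fixed (hD0 : ∀ x y : ℝ, D x y = 0 ↔ x = y)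
    (hDnn : ∀ x y : ℝ, 0 ≤ D x y)
    (hDc : ∀ a : ℝ, Continuous fun y => D a y)
    {σ : Equiv.Perm ℝ} (hg : good D σ) {p : ℝ} (hp : σ p = p) :
    ∀ x, σ x = x := by
  intro x
  by_contra hx
  rcases lt_trichotomy x p with h | h | h
  · -- mirror
    set D' : ℝ → ℝ → ℝ := fun s t => D (-s) (-t) with hD'
    set σ' : Equiv.Perm ℝ := (Equiv.neg ℝ).trans (σ.trans (Equiv.neg ℝ)) with hσ'
    have hσ'app : ∀ y, σ' y = -σ (-y) := fun y => rfl
    have hg' : good D' σ' := by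
      constructor
      · intro s t hst
        have : σ (-t) < σ (-s) := hg.1 (by linarith)
        simp only [hσ'app]
        linarith
      · intro s t
        simp only [hσ'app, hD', neg_neg]
        exact hg.2 _ _
    have hD0' : ∀ x y : ℝ, D' x y = 0 ↔ x = y := by
      intro x y
      rw [hD']
      simp only
      rw [hD0]
      constructor
      · intro hxy; linarith
      · intro hxy; rw [hxy]
    have hDnn' : ∀ x y : ℝ, 0 ≤ D' x y := fun x y => hDnn _ _
    have hDc' : ∀ a : ℝ, Continuous fun y => D' a y := by
      intro a
      exact (hDc (-a)).comp continuous_neg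
    have hp' : σ' (-p) = -p := by
      rw [hσ'app]
      simp [hp]
    have hx' : σ' (-x) ≠ -x := by
      rw [hσ'app]
      simp only [neg_neg]
      intro hc
      exact hx (by linarith)
    exact freeAux2 hD0' hDnn' hDc' hg' (show -p < -x by linarith) hp' hx'
  · exact hx (h ▸ hp)
  · exact freeAux2 hD0 hDnn hDc hg h hp hx




/-! ### Dyadic rationals -/

noncomputable def dy (n : ℕ) (k : ℤ) : ℝ := (k : ℝ) / 2 ^ n

lemma dy_base {n N : ℕ} (h : n ≤ N) (k : ℤ) : dy n k = dy N (2 ^ (N - n) * k) := by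
  unfold dy
  have h2 : (2 : ℝ) ^ N = 2 ^ (N - n) * 2 ^ n := by rw [← pow_add, Nat.sub_add_cancel h]
  push_cast
  rw [h2, mul_div_mul_left _ _ (ne_of_gt (by positivity : (0 : ℝ) < 2 ^ (N - n)))]

lemma dy_add (n m : ℕ) (k k' : ℤ) :
    dy n k + dy m k' = dy (max n m) (2 ^ (max n m - n) * k + 2 ^ (max n m - m) * k') := by
  rw [dy_base (le_max_left n m) k, dy_base (le_max_right n m) k']
  unfold dy
  push_cast
  ring

lemma exists_dy_btwn {s t : ℝ} (h : s < t) : ∃ n k, s < dy n k ∧ dy n k < t := by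
  obtain ⟨n, hn⟩ := exists_pow_lt_of_lt_one (sub_pos.2 h) (show (1 : ℝ) / 2 < 1 by norm_num)
  have h2n : (0 : ℝ) < 2 ^ n := by positivity
  refine ⟨n, ⌊s * 2 ^ n⌋ + 1, ?_, ?_⟩
  · rw [dy, lt_div_iff₀ h2n]
    push_cast
    exact Int.lt_floor_add_one (s * 2 ^ n)
  · rw [dy, div_lt_iff₀ h2n]
    have h1 : (⌊s * 2 ^ n⌋ : ℝ) ≤ s * 2 ^ n := Int.floor_le (s * 2 ^ n)
    have h3 : (1 : ℝ) < (t - s) * 2 ^ n := by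
      rw [div_pow, one_pow, div_lt_iff₀ h2n] at hn
      linarith
    have h4 : (t - s) * 2 ^ n = t * 2 ^ n - s * 2 ^ n := by ring
    push_cast
    linarith

lemma dense_dy : Dense {x : ℝ | ∃ n k, x = dy n k} := by
  rw [dense_iff_exists_between]
  intro a b hab
  obtain ⟨n, k, h1, h2⟩ := exists_dy_btwn hab
  exact ⟨dy n k, ⟨n, k, rfl⟩, h1, h2⟩

/-! ### The transported metric and its transitive monotone isometry group -/

section Main

variable {X : Type*} [MetricSpace X] (e : X ≃ₜ ℝ)

/-- The metric on `ℝ` transported from `X` via `e`. -/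
def Dm (s t : ℝ) : ℝ := dist (e.symm s) (e.symm t)

lemma Dm_zero_iff : ∀ s t : ℝ, Dm e s t = 0 ↔ s = t := by
  intro s t
  rw [Dm, dist_eq_zero]
  constructor
  · intro h
    have := congrArg e h
    simpa using this
  · rintro rfl
    rfl

lemma Dm_nonneg : ∀ s t : ℝ, 0 ≤ Dm e s t := fun _ _ => dist_nonneg

lemma Dm_symm (s t : ℝ) : Dm e s t = Dm e t s := dist_comm _ _

lemma Dm_tri (s t u : ℝ) : Dm e s u ≤ Dm e s t + Dm e t u := dist_triangle _ _ _

lemma Dm_cont : ∀ a : ℝ, Continuous fun y => Dm e a y := fun a =>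
  Continuous.dist continuous_const e.symm.continuous

lemma tendsto_iff_Dm {α : Type*} {l : Filter α} {u : α → ℝ} {x : ℝ} :
    Tendsto u l (𝓝 x) ↔ Tendsto (fun n => Dm e (u n) x) l (𝓝 0) := by
  constructor
  · intro h
    exact tendsto_iff_dist_tendsto_zero.1 ((e.symm.continuous.tendsto x).comp h)
  · intro h
    have h1 : Tendsto (fun n => e.symm (u n)) l (𝓝 (e.symm x)) :=
      tendsto_iff_dist_tendsto_zero.2 h
    have h2 := (e.continuous.tendsto (e.symm x)).comp h1
    simp only [Homeomorph.apply_symm_apply] at h2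
    exact h2.congr fun n => by simp

variable (htrans : ∀ x y : X, ∃ f : X ≃ᵢ X, f x = y)

include htrans

lemma exists_isoPerm (a b : ℝ) :
    ∃ σ : Equiv.Perm ℝ, Continuous σ ∧ (∀ s t, Dm e (σ s) (σ t) = Dm e s t) ∧ σ a = b := by
  obtain ⟨f, hf⟩ := htrans (e.symm a) (e.symm b)
  refine ⟨(e.symm.toEquiv.trans f.toEquiv).trans e.toEquiv, ?_, ?_, ?_⟩
  · exact e.continuous.comp (f.continuous.comp e.symm.continuous)
  · intro s t
    show Dm e (e (f (e.symm s))) (e (f (e.symm t))) = Dm e s t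
    rw [Dm, Dm]
    simp only [Homeomorph.symm_apply_apply]
    exact f.dist_eq _ _
  · show e (f (e.symm a)) = b
    rw [hf]
    simp

lemma exists_good_mono (a b : ℝ) :
    ∃ σ : Equiv.Perm ℝ, good (Dm e) σ ∧ σ a = b := by
  obtain ⟨σ0, hc0, hi0, hab⟩ := exists_isoPerm e htrans a b
  rcases hc0.strictMono_of_inj σ0.injective with hm | hanti
  · exact ⟨σ0, ⟨hm, hi0⟩, hab⟩
  · -- find a fixed point of the decreasing `σ0`
    have hfix : ∃ c, σ0 c = c := by
      set y := max 0 (σ0 0) with hy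
      set y' := min 0 (σ0 0) with hy'
      have h1 : σ0 y ≤ y := by
        calc σ0 y ≤ σ0 0 := hanti.antitone (le_max_left _ _)
          _ ≤ y := le_max_right _ _
      have h2 : y' ≤ σ0 y' := by
        calc y' ≤ σ0 0 := min_le_right _ _
          _ ≤ σ0 y' := hanti.antitone (min_le_left _ _)
      rcases eq_or_lt_of_le h1 with h | h
      · exact ⟨y, h⟩
      rcases eq_or_lt_of_le h2 with h' | h' 
      · exact ⟨y', h'.symm⟩
      obtain ⟨c, _, hcfix⟩ := ivt_fix hc0 h h'
      exact ⟨c, hcfix⟩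
    obtain ⟨c, hc⟩ := hfix
    obtain ⟨τ, hτc, hτi, hτca⟩ := exists_isoPerm e htrans c a
    set ρ : Equiv.Perm ℝ := τ * σ0 * τ⁻¹ with hρ
    have hρa : ρ a = a := by
      have hτinv : τ⁻¹ a = c := by
        rw [← hτca]
        simp
      simp only [hρ, Equiv.Perm.mul_apply, hτinv, hc, hτca]
    set σ1 : Equiv.Perm ℝ := σ0 * ρ with hσ1
    have hσ1ab : σ1 a = b := by
      simp only [hσ1, Equiv.Perm.mul_apply, hρa, hab]
    have happ : ∀ x, σ1 x = σ0 (τ (σ0 (τ⁻¹ x))) := fun x => rfl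
    have hmono1 : StrictMono ⇑σ1 := by
      rcases hτc.strictMono_of_inj τ.injective with hm | ha
      · intro x y hxy
        rw [happ, happ]
        exact hanti (hm (hanti (perm_inv_strictMono hm hxy)))
      · intro x y hxy
        rw [happ, happ]
        exact hanti (ha (hanti (perm_inv_strictAnti ha hxy)))
    have hτinv : ∀ s t, Dm e (τ⁻¹ s) (τ⁻¹ t) = Dm e s t := by
      intro s t
      have := hτi (τ⁻¹ s) (τ⁻¹ t)
      simpa using this.symm
    have hi1 : ∀ s t, Dm e (σ1 s) (σ1 t) = Dm e s t := by
      intro s t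
      rw [happ, happ, hi0, hτi, hi0, hτinv]
    exact ⟨σ1, ⟨hmono1, hi1⟩, hσ1ab⟩


/-! ### The one-parameter family of translations -/

noncomputable def T (a : ℝ) : Equiv.Perm ℝ := (exists_good_mono e htrans 0 a).choose

lemma T_good (a : ℝ) : good (Dm e) (T e htrans a) :=
  (exists_good_mono e htrans 0 a).choose_spec.1

lemma T_zero (a : ℝ) : T e htrans a 0 = a :=
  (exists_good_mono e htrans 0 a).choose_spec.2

lemma good_eq_of_zero {σ τ : Equiv.Perm ℝ} (hσ : good (Dm e) σ) (hτ : good (Dm e) τ)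
    (h : σ 0 = τ 0) : σ = τ := by
  have hg : good (Dm e) (σ⁻¹ * τ) := hσ.inv.mul hτ
  have h0 : (σ⁻¹ * τ) 0 = 0 := by
    simp only [Equiv.Perm.mul_apply, ← h, Equiv.Perm.inv_def, Equiv.symm_apply_apply]
  have hid := free_of_fixed (Dm_zero_iff e) (Dm_nonneg e) (Dm_cont e) hg h0
  ext x
  have h1 := hid x
  simp only [Equiv.Perm.mul_apply] at h1
  have h2 := congrArg σ h1
  simpa using h2.symm

lemma T_eq {σ : Equiv.Perm ℝ} (hσ : good (Dm e) σ) : T e htrans (σ 0) = σ :=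
  good_eq_of_zero e htrans (T_good e htrans (σ 0)) hσ (T_zero e htrans (σ 0))

lemma T_of_apply (a b : ℝ) :
    T e htrans (T e htrans a b) = T e htrans a * T e htrans b := by
  have hg : good (Dm e) (T e htrans a * T e htrans b) :=
    (T_good e htrans a).mul (T_good e htrans b)
  have h0 : (T e htrans a * T e htrans b) 0 = T e htrans a b := by
    simp only [Equiv.Perm.mul_apply, T_zero]
  have := T_eq e htrans hg
  rwa [h0] at this

lemma T_one : T e htrans 0 = 1 := by
  have := T_eq e htrans (good.one (D := Dm e))
  simpa using this

lemma T_no_fixed {a : ℝ} (ha : a ≠ 0) : ∀ x, T e htrans a x ≠ x := by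
  intro x hx
  have hall := free_of_fixed (Dm_zero_iff e) (Dm_nonneg e) (Dm_cont e) (T_good e htrans a) hx
  have := hall 0
  rw [T_zero] at this
  exact ha this

lemma lt_T_of_pos {a : ℝ} (ha : 0 < a) : ∀ x, x < T e htrans a x := by
  intro x
  rcases (T_no_fixed e htrans (ne_of_gt ha) x).lt_or_gt with h | h
  · exfalso
    have h0 : (0 : ℝ) < T e htrans a 0 := by rw [T_zero]; exact ha
    obtain ⟨c, _, hcfix⟩ := ivt_fix (T_good e htrans a).continuous h h0
    exact T_no_fixed e htrans (ne_of_gt ha) c hcfix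
  · exact h

lemma T_lt_of_neg {a : ℝ} (ha : a < 0) : ∀ x, T e htrans a x < x := by
  intro x
  rcases (T_no_fixed e htrans (ne_of_lt ha) x).lt_or_gt with h | h
  · exact h
  · exfalso
    have h0 : T e htrans a 0 < 0 := by rw [T_zero]; exact ha
    obtain ⟨c, _, hcfix⟩ := ivt_fix (T_good e htrans a).continuous h0 h
    exact T_no_fixed e htrans (ne_of_lt ha) c hcfix

lemma T_app_strictMono (u : ℝ) : StrictMono fun a => T e htrans a u := by
  intro a a' haa'
  set σ : Equiv.Perm ℝ := (T e htrans a')⁻¹ * T e htrans a with hσdef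
  have hg : good (Dm e) σ := (T_good e htrans a').inv.mul (T_good e htrans a)
  have hσ0 : σ 0 < 0 := by
    have h1 : a < T e htrans a' 0 := by rw [T_zero]; exact haa'
    have h2 := perm_inv_strictMono (T_good e htrans a').1 h1
    simp only [Equiv.Perm.inv_def, Equiv.symm_apply_apply] at h2
    rw [hσdef, Equiv.Perm.mul_apply, T_zero]
    exact h2
  have hall : ∀ x, σ x < x := by
    intro x
    have hne : σ x ≠ x := by
      intro hx
      have hall' := free_of_fixed (Dm_zero_iff e) (Dm_nonneg e) (Dm_cont e) hg hx
      have := hall' 0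
      linarith
    rcases hne.lt_or_gt with h | h
    · exact h
    · exfalso
      obtain ⟨c, _, hcfix⟩ := ivt_fix hg.continuous hσ0 h
      have hall' := free_of_fixed (Dm_zero_iff e) (Dm_nonneg e) (Dm_cont e) hg hcfix
      have := hall' 0
      linarith
  have := (T_good e htrans a').1 (hall u)
  simpa [hσdef, Equiv.Perm.mul_apply] using this

lemma T_app_surjective (u : ℝ) : Function.Surjective fun a => T e htrans a u := by
  intro b
  obtain ⟨σ, hg, hub⟩ := exists_good_mono e htrans u b
  refine ⟨σ 0, ?_⟩
  simp only
  rw [T_eq e htrans hg, hub]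

lemma T_app_continuous (u : ℝ) : Continuous fun a => T e htrans a u := by
  have := (StrictMono.orderIsoOfSurjective _ (T_app_strictMono e htrans u)
    (T_app_surjective e htrans u)).continuous
  rwa [StrictMono.coe_orderIsoOfSurjective] at this

/-! ### Integer powers -/

noncomputable def zp (a : ℝ) (k : ℤ) : ℝ := (T e htrans a ^ k) 0

lemma T_zp (a : ℝ) (k : ℤ) : T e htrans (zp e htrans a k) = T e htrans a ^ k :=
  T_eq e htrans ((T_good e htrans a).zpow k)

lemma zp_add (a : ℝ) (k l : ℤ) :
    zp e htrans a (k + l) = T e htrans (zp e htrans a k) (zp e htrans a l) := by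
  rw [zp, zpow_add, Equiv.Perm.mul_apply, T_zp]
  rfl

lemma zp_zero (a : ℝ) : zp e htrans a 0 = 0 := by
  rw [zp, zpow_zero]
  rfl

lemma zp_one (a : ℝ) : zp e htrans a 1 = a := by
  rw [zp, zpow_one, T_zero]

lemma zp_strictMono {a : ℝ} (ha : 0 < a) : StrictMono (zp e htrans a) := by
  apply strictMono_int_of_lt_succ
  intro k
  have h1 : zp e htrans a (k + 1) = T e htrans a (zp e htrans a k) := by
    rw [add_comm, zp_add, zp_one]
  rw [h1]
  exact lt_T_of_pos e htrans ha _

lemma zp_nat (a : ℝ) (n : ℕ) : zp e htrans a (n : ℤ) = (⇑(T e htrans a))^[n] 0 := by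
  rw [zp, zpow_natCast, Equiv.Perm.iterate_eq_pow]

lemma zp_unbounded_above {a : ℝ} (ha : 0 < a) : ∀ M, ∃ k : ℤ, M ≤ zp e htrans a k := by
  intro M
  by_contra hc
  push_neg at hc
  have h0 : (0 : ℝ) < T e htrans a 0 := by rw [T_zero]; exact ha
  obtain ⟨L, _, _, hfix, _⟩ := orbit_tendsto (T_good e htrans a).continuous
    (T_good e htrans a).1 h0 (fun n => by rw [← zp_nat]; exact (hc _).le)
  exact T_no_fixed e htrans (ne_of_gt ha) L hfix

lemma zp_unbounded_below {a : ℝ} (ha : 0 < a) : ∀ M, ∃ k : ℤ, zp e htrans a k ≤ M := by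
  intro M
  by_contra hc
  push_neg at hc
  set f : Equiv.Perm ℝ := (T e htrans a)⁻¹ with hfdef
  have hgf : good (Dm e) f := (T_good e htrans a).inv
  have hfx : f 0 < 0 := by
    have h1 : (0 : ℝ) < T e htrans a 0 := by rw [T_zero]; exact ha
    have := perm_inv_strictMono (T_good e htrans a).1 h1
    simpa [hfdef] using this
  have hiter : ∀ n : ℕ, (⇑f)^[n] 0 = zp e htrans a (-(n : ℤ)) := by
    intro n
    rw [zp, zpow_neg, zpow_natCast, ← inv_pow, Equiv.Perm.iterate_eq_pow]
  obtain ⟨L, hfixL⟩ := orbit_fixed_dec hgf.continuous hgf.1 hfx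
    (fun n => by rw [hiter]; exact (hc _).le)
  have h2 : L = T e htrans a L := by
    have := congrArg (T e htrans a) hfixL
    simpa [hfdef] using this
  exact T_no_fixed e htrans (ne_of_gt ha) L h2.symm

/-! ### The square map and dyadic roots -/

noncomputable def sq (x : ℝ) : ℝ := T e htrans x x

lemma sq_strictMono : StrictMono (sq e htrans) := by
  intro x y hxy
  calc T e htrans x x < T e htrans x y := (T_good e htrans x).1 hxy
    _ < T e htrans y y := T_app_strictMono e htrans y hxy

lemma lt_sq {x : ℝ} (hx : 0 < x) : x < sq e htrans x := by
  have := T_app_strictMono e htrans x hx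
  simpa [sq, T_one] using this

lemma sq_lt {x : ℝ} (hx : x < 0) : sq e htrans x < x := by
  have := T_app_strictMono e htrans x hx
  simpa [sq, T_one] using this

lemma sq_zero : sq e htrans 0 = 0 := T_zero e htrans 0

lemma sq_continuous : Continuous (sq e htrans) := by
  rw [continuous_iff_continuousAt]
  intro x
  unfold ContinuousAt
  rw [tendsto_iff_Dm e]
  apply squeeze_zero (f := fun y => Dm e (sq e htrans y) (sq e htrans x))
    (g := fun y => Dm e y x + Dm e (T e htrans y x) (T e htrans x x))
    (fun y => Dm_nonneg e _ _)
  · intro y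
    calc Dm e (sq e htrans y) (sq e htrans x)
        ≤ Dm e (T e htrans y y) (T e htrans y x)
          + Dm e (T e htrans y x) (T e htrans x x) := Dm_tri e _ _ _
      _ = Dm e y x + Dm e (T e htrans y x) (T e htrans x x) := by
          rw [(T_good e htrans y).2]
  · have h1 : Tendsto (fun y => Dm e y x) (𝓝 x) (𝓝 0) :=
      (tendsto_iff_Dm e).1 Filter.tendsto_id
    have h2 : Tendsto (fun y => Dm e (T e htrans y x) (T e htrans x x)) (𝓝 x) (𝓝 0) :=
      (tendsto_iff_Dm e).1 ((T_app_continuous e htrans x).tendsto x)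
    simpa using h1.add h2

lemma sq_surjective : Function.Surjective (sq e htrans) := by
  apply (sq_continuous e htrans).surjective
  · apply tendsto_atTop_mono' atTop ?_ tendsto_id
    filter_upwards [eventually_gt_atTop 0] with x hx
    exact (lt_sq e htrans hx).le
  · apply tendsto_atBot_mono' atBot ?_ tendsto_id
    filter_upwards [eventually_lt_atBot 0] with x hx
    exact (sq_lt e htrans hx).le

noncomputable def rt : ℝ ≃o ℝ :=
  StrictMono.orderIsoOfSurjective _ (sq_strictMono e htrans) (sq_surjective e htrans)

lemma rt_apply (x : ℝ) : rt e htrans x = sq e htrans x := by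
  rw [rt]
  exact congrFun (StrictMono.coe_orderIsoOfSurjective _ _ _) x

noncomputable def aSeq (n : ℕ) : ℝ := (⇑(rt e htrans).symm)^[n] 1

lemma sq_aSeq (n : ℕ) : sq e htrans (aSeq e htrans (n + 1)) = aSeq e htrans n := by
  rw [aSeq, Function.iterate_succ_apply', ← rt_apply]
  exact (rt e htrans).apply_symm_apply _

lemma aSeq_pos (n : ℕ) : 0 < aSeq e htrans n := by
  induction n with
  | zero => norm_num [aSeq]
  | succ n ih =>
    have h0 : (rt e htrans).symm 0 = 0 := by
      have hrt : rt e htrans 0 = 0 := by rw [rt_apply, sq_zero]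
      have := congrArg (rt e htrans).symm hrt
      simpa using this.symm
    have : aSeq e htrans (n + 1) = (rt e htrans).symm (aSeq e htrans n) := by
      rw [aSeq, Function.iterate_succ_apply', aSeq]
    rw [this]
    calc (0 : ℝ) = (rt e htrans).symm 0 := h0.symm
      _ < (rt e htrans).symm (aSeq e htrans n) := (rt e htrans).symm.strictMono ih

lemma aSeq_succ_lt (n : ℕ) : aSeq e htrans (n + 1) < aSeq e htrans n := by
  have := lt_sq e htrans (aSeq_pos e htrans (n + 1))
  rwa [sq_aSeq] at this

lemma aSeq_tendsto : Tendsto (aSeq e htrans) atTop (𝓝 0) := by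
  have hanti : Antitone (aSeq e htrans) :=
    antitone_nat_of_succ_le fun n => (aSeq_succ_lt e htrans n).le
  have hbdd : BddBelow (Set.range (aSeq e htrans)) := by
    refine ⟨0, ?_⟩
    rintro y ⟨n, rfl⟩
    exact (aSeq_pos e htrans n).le
  set L := ⨅ n : ℕ, aSeq e htrans n with hLdef
  have ht : Tendsto (aSeq e htrans) atTop (𝓝 L) := tendsto_atTop_ciInf hanti hbdd
  have hL0 : 0 ≤ L := le_ciInf fun n => (aSeq_pos e htrans n).le
  have t1 : Tendsto (fun n => aSeq e htrans (n + 1)) atTop (𝓝 L) :=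
    ht.comp (tendsto_add_atTop_nat 1)
  have t2 : Tendsto (fun n => sq e htrans (aSeq e htrans (n + 1))) atTop (𝓝 (sq e htrans L)) :=
    ((sq_continuous e htrans).tendsto L).comp t1
  have t3 : Tendsto (fun n => sq e htrans (aSeq e htrans (n + 1))) atTop (𝓝 L) := by
    simpa [sq_aSeq] using ht
  have hfix : sq e htrans L = L := tendsto_nhds_unique t2 t3
  have hL : L = 0 := by
    rcases hL0.lt_or_eq with h | h
    · exact absurd hfix (ne_of_gt (lt_sq e htrans h))
    · exact h.symm
  rwa [hL] at ht

lemma T_sq (y : ℝ) : T e htrans (sq e htrans y) = T e htrans y ^ (2 : ℕ) := by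
  rw [sq, T_of_apply, pow_two]

lemma T_aSeq_pow (n j : ℕ) :
    T e htrans (aSeq e htrans n) = T e htrans (aSeq e htrans (n + j)) ^ ((2 : ℕ) ^ j) := by
  induction j with
  | zero => simp
  | succ j ih =>
    rw [ih, ← sq_aSeq e htrans (n + j), T_sq, ← pow_mul]
    have : aSeq e htrans (n + j + 1) = aSeq e htrans (n + (j + 1)) := by ring_nf
    rw [this]
    congr 1
    ring

lemma zp_base {n N : ℕ} (h : n ≤ N) (k : ℤ) :
    zp e htrans (aSeq e htrans n) k = zp e htrans (aSeq e htrans N) (2 ^ (N - n) * k) := by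
  rw [zp, zp, T_aSeq_pow e htrans n (N - n), Nat.add_sub_cancel' h]
  rw [← zpow_natCast (T e htrans (aSeq e htrans N)) ((2 : ℕ) ^ (N - n)), ← zpow_mul]
  congr 1

/-! ### The conjugating map Ψ -/

lemma zp_le_iff {n m : ℕ} {k k' : ℤ} :
    zp e htrans (aSeq e htrans n) k ≤ zp e htrans (aSeq e htrans m) k' ↔ dy n k ≤ dy m k' := by
  rw [zp_base e htrans (le_max_left n m) k, zp_base e htrans (le_max_right n m) k']
  rw [(zp_strictMono e htrans (aSeq_pos e htrans (max n m))).le_iff_le]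
  rw [dy_base (le_max_left n m) k, dy_base (le_max_right n m) k']
  unfold dy
  have hpos : (0 : ℝ) < 2 ^ max n m := by positivity
  rw [div_le_div_iff₀ hpos hpos, mul_le_mul_iff_of_pos_right hpos, Int.cast_le]

noncomputable def Psi (t : ℝ) : ℝ :=
  sSup {y | ∃ n k, dy n k ≤ t ∧ y = zp e htrans (aSeq e htrans n) k}

lemma Psi_set_nonempty (t : ℝ) :
    {y | ∃ n k, dy n k ≤ t ∧ y = zp e htrans (aSeq e htrans n) k}.Nonempty := by
  refine ⟨zp e htrans (aSeq e htrans 0) ⌊t⌋, 0, ⌊t⌋, ?_, rfl⟩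
  simpa [dy] using Int.floor_le t

lemma Psi_set_bddAbove (t : ℝ) :
    BddAbove {y | ∃ n k, dy n k ≤ t ∧ y = zp e htrans (aSeq e htrans n) k} := by
  refine ⟨zp e htrans (aSeq e htrans 0) ⌈t⌉, ?_⟩
  rintro y ⟨n, k, hk, rfl⟩
  rw [zp_le_iff e htrans]
  calc dy n k ≤ t := hk
    _ ≤ dy 0 ⌈t⌉ := by simpa [dy] using Int.le_ceil t

lemma Psi_mono : Monotone (Psi e htrans) := by
  intro s t hst
  apply csSup_le_csSup (Psi_set_bddAbove e htrans t) (Psi_set_nonempty e htrans s)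
  rintro y ⟨n, k, hk, rfl⟩
  exact ⟨n, k, hk.trans hst, rfl⟩

lemma Psi_dyadic (n : ℕ) (k : ℤ) :
    Psi e htrans (dy n k) = zp e htrans (aSeq e htrans n) k := by
  apply le_antisymm
  · apply csSup_le (Psi_set_nonempty e htrans _)
    rintro y ⟨m, k', hk', rfl⟩
    exact (zp_le_iff e htrans).2 hk'
  · exact le_csSup (Psi_set_bddAbove e htrans _) ⟨n, k, le_refl _, rfl⟩

lemma Psi_zero : Psi e htrans 0 = 0 := by
  have h0 : dy 0 0 = 0 := by simp [dy]
  have h1 := Psi_dyadic e htrans 0 0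
  rw [h0, zp_zero] at h1
  exact h1

lemma dense_H : Dense {y : ℝ | ∃ n k, y = zp e htrans (aSeq e htrans n) k} := by
  rw [dense_iff_exists_between]
  intro u v huv
  set g := StrictMono.orderIsoOfSurjective _ (T_app_strictMono e htrans u)
    (T_app_surjective e htrans u) with hgdef
  have hgapp : ∀ w, g w = T e htrans w u := fun w =>
    congrFun (StrictMono.coe_orderIsoOfSurjective _ _ _) w
  have hg0 : g 0 = u := by
    rw [hgapp, T_one]
    rfl
  have hgsv : 0 < g.symm v := by
    have h1 : g 0 < g (g.symm v) := by
      rw [hg0, OrderIso.apply_symm_apply]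
      exact huv
    exact g.strictMono.lt_iff_lt.1 h1
  obtain ⟨n, hn⟩ := ((aSeq_tendsto e htrans).eventually_lt_const hgsv).exists
  obtain ⟨k₀, hk₀⟩ := zp_unbounded_below e htrans (aSeq_pos e htrans n) u
  obtain ⟨k₁, hk₁⟩ := zp_unbounded_above e htrans (aSeq_pos e htrans n) (u + 1)
  have Hbdd : ∃ b : ℤ, ∀ z : ℤ, u < zp e htrans (aSeq e htrans n) z → b ≤ z := by
    refine ⟨k₀, fun z hz => ?_⟩
    by_contra hc
    push_neg at hc
    have := (zp_strictMono e htrans (aSeq_pos e htrans n)).monotone hc.le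
    linarith
  obtain ⟨lb, hlbP, hlbmin⟩ := Int.exists_least_of_bdd Hbdd ⟨k₁, by linarith⟩
  refine ⟨zp e htrans (aSeq e htrans n) lb, ⟨n, lb, rfl⟩, hlbP, ?_⟩
  have hprev : zp e htrans (aSeq e htrans n) (lb - 1) ≤ u := by
    by_contra hc
    push_neg at hc
    have := hlbmin _ hc
    omega
  have hsplit : zp e htrans (aSeq e htrans n) lb
      = T e htrans (aSeq e htrans n) (zp e htrans (aSeq e htrans n) (lb - 1)) := by
    have h1 := zp_add e htrans (aSeq e htrans n) 1 (lb - 1)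
    rw [show (1 : ℤ) + (lb - 1) = lb by ring, zp_one] at h1
    exact h1
  calc zp e htrans (aSeq e htrans n) lb
      = T e htrans (aSeq e htrans n) (zp e htrans (aSeq e htrans n) (lb - 1)) := hsplit
    _ ≤ T e htrans (aSeq e htrans n) u := (T_good e htrans (aSeq e htrans n)).1.monotone hprev
    _ = g (aSeq e htrans n) := (hgapp _).symm
    _ < g (g.symm v) := g.strictMono hn
    _ = v := g.apply_symm_apply v

lemma denseRange_Psi : DenseRange (Psi e htrans) := by
  refine (dense_H e htrans).mono ?_
  rintro y ⟨n, k, rfl⟩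
  exact ⟨dy n k, Psi_dyadic e htrans n k⟩

lemma Psi_cont : Continuous (Psi e htrans) :=
  (Psi_mono e htrans).continuous_of_denseRange (denseRange_Psi e htrans)

lemma Psi_surj : Function.Surjective (Psi e htrans) := by
  apply (Psi_cont e htrans).surjective
  · apply tendsto_atTop_atTop_of_monotone (Psi_mono e htrans)
    intro b
    obtain ⟨k, hk⟩ := zp_unbounded_above e htrans (aSeq_pos e htrans 0) b
    exact ⟨dy 0 k, by rw [Psi_dyadic]; exact hk⟩
  · apply tendsto_atBot_atBot_of_monotone (Psi_mono e htrans)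
    intro b
    obtain ⟨k, hk⟩ := zp_unbounded_below e htrans (aSeq_pos e htrans 0) b
    exact ⟨dy 0 k, by rw [Psi_dyadic]; exact hk⟩

lemma Psi_strictMono : StrictMono (Psi e htrans) := by
  intro s t hst
  obtain ⟨n1, k1, h1a, h1b⟩ := exists_dy_btwn hst
  obtain ⟨n2, k2, h2a, h2b⟩ := exists_dy_btwn h1b
  have hd : Psi e htrans (dy n1 k1) < Psi e htrans (dy n2 k2) := by
    rw [Psi_dyadic, Psi_dyadic]
    by_contra hc
    push_neg at hc
    have := (zp_le_iff e htrans).1 hc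
    linarith
  calc Psi e htrans s ≤ Psi e htrans (dy n1 k1) := Psi_mono e htrans h1a.le
    _ < Psi e htrans (dy n2 k2) := hd
    _ ≤ Psi e htrans t := Psi_mono e htrans h2b.le

lemma Psi_add_dyadic (n m : ℕ) (k k' : ℤ) :
    Psi e htrans (dy n k + dy m k')
      = T e htrans (Psi e htrans (dy n k)) (Psi e htrans (dy m k')) := by
  rw [dy_add n m k k', Psi_dyadic, Psi_dyadic, Psi_dyadic]
  rw [zp_add, ← zp_base e htrans (le_max_left n m) k, ← zp_base e htrans (le_max_right n m) k']

lemma Psi_add_right_dyadic (s : ℝ) (m : ℕ) (k' : ℤ) :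
    Psi e htrans (s + dy m k') = T e htrans (Psi e htrans s) (Psi e htrans (dy m k')) := by
  have hfun : (fun s => Psi e htrans (s + dy m k'))
      = fun s => T e htrans (Psi e htrans s) (Psi e htrans (dy m k')) := by
    apply Continuous.ext_on dense_dy
    · exact (Psi_cont e htrans).comp (continuous_id.add continuous_const)
    · exact (T_app_continuous e htrans (Psi e htrans (dy m k'))).comp (Psi_cont e htrans)
    · rintro x ⟨n, k, rfl⟩
      exact Psi_add_dyadic e htrans n m k k'
  exact congrFun hfun s

lemma Psi_add (s t : ℝ) :
    Psi e htrans (s + t) = T e htrans (Psi e htrans s) (Psi e htrans t) := by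
  have hfun : (fun t => Psi e htrans (s + t))
      = fun t => T e htrans (Psi e htrans s) (Psi e htrans t) := by
    apply Continuous.ext_on dense_dy
    · exact (Psi_cont e htrans).comp (continuous_const.add continuous_id)
    · exact (T_good e htrans (Psi e htrans s)).continuous.comp (Psi_cont e htrans)
    · rintro x ⟨n, k, rfl⟩
      exact Psi_add_right_dyadic e htrans s n k
  exact congrFun hfun t

lemma T_comm (a b : ℝ) : T e htrans a b = T e htrans b a := by
  obtain ⟨u, rfl⟩ := Psi_surj e htrans a
  obtain ⟨v, rfl⟩ := Psi_surj e htrans b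
  rw [← Psi_add, ← Psi_add, add_comm]

/-! ### Conclusion -/


end Main



theorem main_result {X : Type*} [MetricSpace X] (e : X ≃ₜ ℝ)
    (htrans : ∀ x y : X, ∃ f : X ≃ᵢ X, f x = y) : ∃ (h : ℝ → ℝ) (φ : X ≃ ℝ), ∀ x y : X, dist x y = h |φ x - φ y| := by
  classical
  have hbij : Function.Bijective (Psi e htrans) :=
    ⟨(Psi_strictMono e htrans).injective, Psi_surj e htrans⟩
  set ψ : ℝ ≃ ℝ := Equiv.ofBijective _ hbij with hψ
  refine ⟨fun r => Dm e (Psi e htrans r) 0, e.toEquiv.trans ψ.symm, ?_⟩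
  intro x y
  set u := ψ.symm (e x) with hu
  set v := ψ.symm (e y) with hv
  have hex : Psi e htrans u = e x := ψ.apply_symm_apply (e x)
  have hey : Psi e htrans v = e y := ψ.apply_symm_apply (e y)
  have hdist : dist x y = Dm e (e x) (e y) := by
    rw [Dm]
    simp
  have key : ∀ r : ℝ, Dm e (Psi e htrans (r + v)) (Psi e htrans v)
      = Dm e (Psi e htrans r) 0 := by
    intro r
    calc Dm e (Psi e htrans (r + v)) (Psi e htrans v)
        = Dm e (T e htrans (Psi e htrans v) (Psi e htrans r))
            (T e htrans (Psi e htrans v) 0) := by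
          rw [Psi_add e htrans r v, T_comm e htrans, T_zero]
      _ = Dm e (Psi e htrans r) 0 := (T_good e htrans (Psi e htrans v)).2 _ _
  have heven : ∀ r : ℝ, Dm e (Psi e htrans (-r)) 0 = Dm e (Psi e htrans r) 0 := by
    intro r
    have h1 : Dm e (Psi e htrans (-r)) 0
        = Dm e (T e htrans (Psi e htrans r) (Psi e htrans (-r)))
            (T e htrans (Psi e htrans r) 0) :=
      ((T_good e htrans (Psi e htrans r)).2 (Psi e htrans (-r)) 0).symm
    rw [h1, ← Psi_add e htrans r (-r), T_zero, add_neg_cancel, Psi_zero]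
    exact Dm_symm e 0 (Psi e htrans r)
  have hmain : dist x y = Dm e (Psi e htrans (u - v)) 0 := by
    rw [hdist, ← hex, ← hey]
    have h2 := key (u - v)
    rw [sub_add_cancel] at h2
    exact h2
  have hφx : (e.toEquiv.trans ψ.symm) x = u := rfl
  have hφy : (e.toEquiv.trans ψ.symm) y = v := rfl
  have habs : Dm e (Psi e htrans |u - v|) 0 = Dm e (Psi e htrans (u - v)) 0 := by
    rcases abs_cases (u - v) with ⟨h1, _⟩ | ⟨h1, _⟩
    · rw [h1]
    · rw [h1]
      exact heven (u - v)
  simp only [hφx, hφy]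
  rw [habs]
  exact hmain

end IsomHomogProof


/-- Let `(X,d)` be a metric space homeomorphic to `ℝ` whose isometry group acts
transitively. Then there is `h : ℝ → ℝ` such that `(X,d)` is isometric to `(ℝ, d_h)` with
`d_h(s,t) := h(|s−t|)`: every isometrically homogeneous metric on the line is, up to
isometry, a translation-invariant metric on `ℝ`. -/
theorem isometrically_homogeneous_curve_classification
    {X : Type*} [MetricSpace X] (e : X ≃ₜ ℝ)
    (htrans : ∀ x y : X, ∃ f : X ≃ᵢ X, f x = y) :
    ∃ (h : ℝ → ℝ) (φ : X ≃ ℝ), ∀ x y : X, dist x y = h |φ x - φ y| := by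
  exact IsomHomogProof.main_result e htrans
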